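/- Let 0 < q < 1. Then (1 − q + sqrt(q(1−q)/2)) / (1 + sqrt(q)) < 1. Equivalently, with B_AMGS = (1 + sqrt(q/(2(1−q))))² and B_FGM = (1/(1−sqrt(q)))², one has sqrt(B_AMGS / B_FGM) < 1, i.e., B_AMGS < B_FGM. -/

import Mathlib

theorem fgm_rate_beats_amgs_rate (q : ℝ) (hq0 : 0 < q) (hq1 : q < 1) :
    (1 - q + Real.sqrt (q * (1 - q) / 2)) / (1 + Real.sqrt q) < 1 ∧
    (1 + Real.sqrt (q / (2 * (1 - q)))) ^ 2 < (1 / (1 - Real.sqrt q)) ^ 2 := by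
  set s := Real.sqrt q with hs
  have hs0 : 0 < s := Real.sqrt_pos.mpr hq0
  have hsq : s ^ 2 = q := Real.sq_sqrt hq0.le
  have hs1 : s < 1 := by
    nlinarith [hsq, hs0]
  have h1q : 0 < 1 - q := by linarith
  constructor
  · rw [div_lt_one (by linarith)]
    have key : Real.sqrt (q * (1 - q) / 2) < s + q := by
      rw [Real.sqrt_lt' (by nlinarith)]
      nlinarith [hsq, hs0, hs1]
    linarith
  · have ht : Real.sqrt (q / (2 * (1 - q))) < s / (1 - s) := by
      rw [Real.sqrt_lt' (div_pos hs0 (by linarith))]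
      rw [div_pow, div_lt_div_iff₀ (by positivity) (pow_pos (by linarith) 2)]
      nlinarith [hsq, mul_pos (mul_pos hs0 hs0) (show (0:ℝ) < 1 - s by linarith)]
    have h2 : 1 + Real.sqrt (q / (2 * (1 - q))) < 1 / (1 - s) := by
      have hne : (1:ℝ) - s ≠ 0 := by linarith
      have : 1 + s / (1 - s) = 1 / (1 - s) := by field_simp; ring
      linarith
    have h0 : (0:ℝ) ≤ 1 + Real.sqrt (q / (2 * (1 - q))) :=
      by positivity
    exact pow_lt_pow_left₀ h2 h0 two_ne_zero
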